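/- Let U be an even unimodular lattice and let L ⊆ U be a primitive nondegenerate sublattice with orthogonal complement L^⊥. For every stable isometry g ∈ O(L)* there exists a unique isometry ĝ of U such that ĝ|_L = g and ĝ(x) = x for every x ∈ L^⊥. (This is the other direction of Lemma 2.2: the restriction map induces an isomorphism Γ(L,U) ≅ O(L)*, where Γ(L,U) = {g ∈ O(U) : g|_{L^⊥} = id}.) -/

import Mathlib

/-- `v` pairs integrally with every element of the lattice `L`. Together with the
condition `v ∈ spanℚ L`, this says that `v` belongs to the dual lattice `L^∨`. -/
def InDual {V : Type*} [AddCommGroup V] [Module ℚ V]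
    (B : LinearMap.BilinForm ℚ V) (L : Submodule ℤ V) (v : V) : Prop :=
  ∀ y ∈ L, ∃ n : ℤ, B v y = (n : ℚ)

/-- Clearing denominators: every element of the `ℚ`-span of a `ℤ`-submodule has a nonzero
integer multiple inside the submodule. -/
lemma clear_denominators {V : Type*} [AddCommGroup V] [Module ℚ V]
    (M : Submodule ℤ V) (w : V) (hw : w ∈ Submodule.span ℚ (M : Set V)) :
    ∃ n : ℤ, n ≠ 0 ∧ ((n : ℚ)) • w ∈ M := by
  refine Submodule.span_induction ?_ ?_ ?_ ?_ hw
  · intro x hx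
    exact ⟨1, one_ne_zero, by simpa using hx⟩
  · exact ⟨1, one_ne_zero, by simp⟩
  · rintro x y hx hy ⟨n, hn, hnx⟩ ⟨m, hm, hmy⟩
    rw [Int.cast_smul_eq_zsmul ℚ] at hnx hmy
    refine ⟨n * m, mul_ne_zero hn hm, ?_⟩
    rw [Int.cast_smul_eq_zsmul ℚ, smul_add]
    refine Submodule.add_mem M ?_ ?_
    · rw [mul_comm, mul_smul]; exact M.smul_mem m hnx
    · rw [mul_smul]; exact M.smul_mem n hmy
  · rintro q x hx ⟨n, hn, hnx⟩
    rw [Int.cast_smul_eq_zsmul ℚ] at hnx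
    refine ⟨n * q.den, mul_ne_zero hn (by exact_mod_cast q.den_ne_zero), ?_⟩
    have hd : (q.den : ℚ) ≠ 0 := by exact_mod_cast q.den_ne_zero
    have hden : (q.num : ℚ) = q * (q.den : ℚ) := (div_eq_iff hd).mp (Rat.num_div_den q)
    have key : ((n * (q.den : ℤ) : ℤ) : ℚ) • (q • x) = ((q.num * n : ℤ) : ℚ) • x := by
      rw [smul_smul]
      congr 1
      push_cast
      rw [hden]; ring
    rw [key, Int.cast_smul_eq_zsmul ℚ, mul_smul]
    exact M.smul_mem q.num hnx

/-- Let `U` be an even unimodular lattice and `L ⊆ U` a primitive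
nondegenerate sublattice.  Every stable isometry `g ∈ O(L)*` (given here as an isometry of
`L ⊗ ℚ = spanℚ L` preserving `L` and acting trivially on the discriminant group) extends
uniquely to an isometry `ĝ` of `U` with `ĝ|_L = g` and `ĝ x = x` for all `x ∈ L^⊥`. -/
theorem stable_isometry_extends_uniquely
    {V : Type*} [AddCommGroup V] [Module ℚ V]
    (B : LinearMap.BilinForm ℚ V)
    (hBsymm : ∀ x y : V, B x y = B y x) (hBnd : B.Nondegenerate)
    (U L : Submodule ℤ V)
    -- `U` is an even unimodular lattice:
    (hUfg : U.FG) (hUspan : Submodule.span ℚ (U : Set V) = ⊤)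
    (hUint : ∀ x ∈ U, ∀ y ∈ U, ∃ n : ℤ, B x y = (n : ℚ))
    (hUeven : ∀ x ∈ U, ∃ n : ℤ, B x x = 2 * (n : ℚ))
    (hUunimodular : ∀ v : V, InDual B U v → v ∈ U)
    -- `L` is a primitive nondegenerate sublattice of `U`:
    (hLU : L ≤ U)
    (hLprim : ∀ x ∈ U, ∀ n : ℤ, n ≠ 0 → n • x ∈ L → x ∈ L)
    (hLnd : ∀ x ∈ L, (∀ y ∈ L, B x y = 0) → x = 0)
    -- `g` is a stable isometry of `L`, given on `L ⊗ ℚ = spanℚ L`: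
    (g : ↥(Submodule.span ℚ (L : Set V)) ≃ₗ[ℚ] ↥(Submodule.span ℚ (L : Set V)))
    (hgisom : ∀ x y : ↥(Submodule.span ℚ (L : Set V)),
      B ((g x : V)) ((g y : V)) = B (x : V) (y : V))
    (hgL : ∀ (x : V) (hx : x ∈ L), (g ⟨x, Submodule.subset_span hx⟩ : V) ∈ L)
    (hgLsymm : ∀ (x : V) (hx : x ∈ L), (g.symm ⟨x, Submodule.subset_span hx⟩ : V) ∈ L)
    (hgstable : ∀ v : ↥(Submodule.span ℚ (L : Set V)),
      InDual B L (v : V) → (g v : V) - (v : V) ∈ L) :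
    ∃! ghat : V ≃ₗ[ℚ] V,
      (∀ x y : V, B (ghat x) (ghat y) = B x y) ∧
      (∀ x : V, x ∈ U ↔ ghat x ∈ U) ∧
      (∀ (x : V) (hx : x ∈ L), ghat x = (g ⟨x, Submodule.subset_span hx⟩ : V)) ∧
      (∀ x ∈ U, (∀ y ∈ L, B x y = 0) → ghat x = x) := by
  classical
  -- finite dimensionality of V
  obtain ⟨S, hS⟩ := hUfg
  have hStop : Submodule.span ℚ (S : Set V) = ⊤ := by
    rw [← top_le_iff, ← hUspan]
    refine Submodule.span_le.mpr ?_
    intro x hx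
    have hx' : x ∈ Submodule.span ℤ (S : Set V) := by rw [hS]; exact hx
    have : Submodule.span ℤ (S : Set V) ≤
        (Submodule.span ℚ (S : Set V)).restrictScalars ℤ :=
      Submodule.span_le.mpr Submodule.subset_span
    exact this hx'
  haveI : FiniteDimensional ℚ V := Module.finite_def.mpr ⟨S, hStop⟩
  have hrefl : B.IsRefl := fun x y h => by rw [hBsymm]; exact h
  -- B restricted to (Submodule.span ℚ (L : Set V)) is nondegenerate
  have hWnd : (B.restrict (Submodule.span ℚ (L : Set V))).Nondegenerate := by
    refine (LinearMap.IsRefl.nondegenerate_iff_separatingLeft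
      (B := B.restrict (Submodule.span ℚ (L : Set V)))
      (fun x y h => hrefl (x : V) (y : V) h)).mpr ?_
    rintro ⟨w, hw⟩ h
    obtain ⟨n, hn, hnw⟩ := clear_denominators L w hw
    have hz : (n : ℚ) • w = 0 := by
      refine hLnd _ hnw ?_
      intro y hy
      have := h ⟨y, Submodule.subset_span hy⟩
      simp only [LinearMap.BilinForm.restrict_apply, LinearMap.domRestrict_apply] at this
      simp [this]
    have : w = 0 := by
      rcases smul_eq_zero.mp hz with h' | h'
      · exact absurd (by exact_mod_cast h' : (n : ℚ) = 0) (by exact_mod_cast hn)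
      · exact h'
    exact Subtype.ext this
  have hcompl : IsCompl (Submodule.span ℚ (L : Set V)) (B.orthogonal (Submodule.span ℚ (L : Set V))) :=
    LinearMap.BilinForm.isCompl_orthogonal_of_restrict_nondegenerate hrefl hWnd
  set P : Submodule ℚ V := B.orthogonal (Submodule.span ℚ (L : Set V)) with hPdef
  have hPmem : ∀ (c : V), c ∈ P → ∀ n ∈ (Submodule.span ℚ (L : Set V)), B n c = 0 := by
    intro c hc n hn
    exact hc n hn
  set e : ((Submodule.span ℚ (L : Set V)) × P) ≃ₗ[ℚ] V := Submodule.prodEquivOfIsCompl (Submodule.span ℚ (L : Set V)) P hcompl with hedef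
  have he_apply : ∀ (x : (Submodule.span ℚ (L : Set V)) × P), e x = (x.1 : V) + (x.2 : V) := by
    intro x
    exact Submodule.coe_prodEquivOfIsCompl' _ _ hcompl x
  set ghat : V ≃ₗ[ℚ] V :=
    e.symm ≪≫ₗ ((g.prodCongr (LinearEquiv.refl ℚ P)) ≪≫ₗ e) with hghatdef
  have hghat_eq : ∀ x : V, ghat x = e ((g.prodCongr (LinearEquiv.refl ℚ P)) (e.symm x)) := by
    intro x; rfl
  have hW_apply : ∀ w : (Submodule.span ℚ (L : Set V)), ghat (w : V) = ((g w : V)) := by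
    intro w
    have h1 : e.symm (w : V) = (w, (0 : P)) := by
      rw [LinearEquiv.symm_apply_eq, he_apply]
      simp
    rw [hghat_eq, h1, LinearEquiv.prodCongr_apply, he_apply]
    simp
  have hP_apply : ∀ c : P, ghat (c : V) = (c : V) := by
    intro c
    have h1 : e.symm (c : V) = ((0 : (Submodule.span ℚ (L : Set V))), c) := by
      rw [LinearEquiv.symm_apply_eq, he_apply]
      simp
    rw [hghat_eq, h1, LinearEquiv.prodCongr_apply, he_apply]
    simp
  have hdecomp : ∀ x : V, ∃ (w : (Submodule.span ℚ (L : Set V))) (c : P), x = (w : V) + (c : V) := by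
    intro x
    exact ⟨(e.symm x).1, (e.symm x).2, by rw [← he_apply, LinearEquiv.apply_symm_apply]⟩
  -- ghat is an isometry
  have hWP : ∀ (a : (Submodule.span ℚ (L : Set V))) (b : P), B (a : V) (b : V) = 0 := fun a b => hPmem _ b.2 _ a.2
  have hPW : ∀ (a : (Submodule.span ℚ (L : Set V))) (b : P), B (b : V) (a : V) = 0 := fun a b => by
    rw [hBsymm]; exact hWP a b
  have hiso : ∀ x y : V, B (ghat x) (ghat y) = B x y := by
    intro x y
    obtain ⟨w, c, rfl⟩ := hdecomp x
    obtain ⟨w', c', rfl⟩ := hdecomp y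
    have h1 : ghat ((w : V) + (c : V)) = (g w : V) + (c : V) := by
      rw [map_add, hW_apply, hP_apply]
    have h2 : ghat ((w' : V) + (c' : V)) = (g w' : V) + (c' : V) := by
      rw [map_add, hW_apply, hP_apply]
    rw [h1, h2]
    simp only [map_add, LinearMap.add_apply]
    rw [hgisom w w', hWP (g w) c', hPW (g w') c, hWP w c', hPW w' c]
  -- g.symm is stable
  have hgsymm_stable : ∀ v : (Submodule.span ℚ (L : Set V)), InDual B L (v : V) → (g.symm v : V) - (v : V) ∈ L := by
    intro v hv
    have hdual : InDual B L ((g.symm v : V)) := by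
      intro y hy
      have h1 : B ((g.symm v : V)) y =
          B ((g (g.symm v) : V)) ((g ⟨y, Submodule.subset_span hy⟩ : V)) := by
        rw [hgisom]
      have h2 : (g (g.symm v)) = v := g.apply_symm_apply v
      rw [h1, h2]
      exact hv _ (hgL y hy)
    have := hgstable (g.symm v) hdual
    rw [g.apply_symm_apply] at this
    have : -((v : V) - (g.symm v : V)) ∈ L := Submodule.neg_mem L this
    simpa using this
  -- key : ghat x - x ∈ L for x ∈ U
  have hWdual : ∀ (w : (Submodule.span ℚ (L : Set V))) (c : P), ((w : V) + (c : V)) ∈ U → InDual B L (w : V) := by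
    intro w c hx y hy
    obtain ⟨n, hn⟩ := hUint _ hx _ (hLU hy)
    refine ⟨n, ?_⟩
    have hcy : B (c : V) y = 0 := by
      rw [hBsymm]; exact hPmem _ c.2 _ (Submodule.subset_span hy)
    have : B ((w : V) + (c : V)) y = B (w : V) y + B (c : V) y := by
      simp [map_add]
    rw [this, hcy, add_zero] at hn
    exact hn
  have hkey : ∀ x ∈ U, ghat x - x ∈ L := by
    intro x hx
    obtain ⟨w, c, rfl⟩ := hdecomp x
    have h1 : ghat ((w : V) + (c : V)) - ((w : V) + (c : V)) = (g w : V) - (w : V) := by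
      rw [map_add, hW_apply, hP_apply]; abel
    rw [h1]
    exact hgstable w (hWdual w c hx)
  -- symm versions
  have hW_symm : ∀ w : (Submodule.span ℚ (L : Set V)), ghat.symm (w : V) = ((g.symm w : V)) := by
    intro w
    rw [LinearEquiv.symm_apply_eq, hW_apply, g.apply_symm_apply]
  have hP_symm : ∀ c : P, ghat.symm (c : V) = (c : V) := by
    intro c
    rw [LinearEquiv.symm_apply_eq, hP_apply]
  have hkey_symm : ∀ x ∈ U, ghat.symm x - x ∈ L := by
    intro x hx
    obtain ⟨w, c, rfl⟩ := hdecomp x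
    have h1 : ghat.symm ((w : V) + (c : V)) - ((w : V) + (c : V))
        = (g.symm w : V) - (w : V) := by
      rw [map_add, hW_symm, hP_symm]; abel
    rw [h1]
    exact hgsymm_stable w (hWdual w c hx)
  have hUiff : ∀ x : V, x ∈ U ↔ ghat x ∈ U := by
    intro x
    constructor
    · intro hx
      have : ghat x = x + (ghat x - x) := by abel
      rw [this]
      exact Submodule.add_mem U hx (hLU (hkey x hx))
    · intro hx
      have h1 : ghat.symm (ghat x) - ghat x ∈ L := hkey_symm _ hx
      rw [ghat.symm_apply_apply] at h1
      have : x = ghat x + (x - ghat x) := by abel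
      rw [this]
      exact Submodule.add_mem U hx (hLU h1)
  have hLext : ∀ (x : V) (hx : x ∈ L), ghat x = (g ⟨x, Submodule.subset_span hx⟩ : V) :=
    fun x hx => hW_apply ⟨x, Submodule.subset_span hx⟩
  have hPfix : ∀ x ∈ U, (∀ y ∈ L, B x y = 0) → ghat x = x := by
    intro x _ hperp
    have hxP : x ∈ P := by
      intro n hn
      refine Submodule.span_induction ?_ ?_ ?_ ?_ hn
      · intro z hz
        show B z x = 0
        rw [hBsymm]; exact hperp z hz
      · show B 0 x = 0; simp
      · intro a b _ _ ha hb
        show B (a + b) x = 0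
        simp only [map_add, LinearMap.add_apply]
        rw [show B a x = 0 from ha, show B b x = 0 from hb]; simp
      · intro q a _ ha
        show B (q • a) x = 0
        simp only [map_smul, LinearMap.smul_apply]
        rw [show B a x = 0 from ha]; simp
    exact hP_apply ⟨x, hxP⟩
  refine ⟨ghat, ⟨hiso, hUiff, hLext, hPfix⟩, ?_⟩
  -- uniqueness
  rintro ghat' ⟨_, _, h3, h4⟩
  refine LinearEquiv.ext ?_
  intro x
  obtain ⟨w, c, rfl⟩ := hdecomp x
  have hWagree : ∀ v : V, v ∈ (Submodule.span ℚ (L : Set V)) → ghat' v = ghat v := by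
    intro v hv
    refine Submodule.span_induction ?_ ?_ ?_ ?_ hv
    · intro z hz
      rw [h3 z hz, hLext z hz]
    · simp
    · intro a b _ _ ha hb
      rw [map_add, map_add, ha, hb]
    · intro q a _ ha
      rw [map_smul, map_smul, ha]
  have hPagree : ∀ v : P, ghat' (v : V) = (v : V) := by
    intro v
    have hvspan : (v : V) ∈ Submodule.span ℚ (U : Set V) := by
      rw [hUspan]; trivial
    obtain ⟨n, hn, hnv⟩ := clear_denominators U (v : V) hvspan
    have hperp : ∀ y ∈ L, B ((n : ℚ) • (v : V)) y = 0 := by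
      intro y hy
      have hvy : B (v : V) y = 0 := by
        rw [hBsymm]; exact hPmem _ v.2 _ (Submodule.subset_span hy)
      simp only [map_smul, LinearMap.smul_apply]
      rw [hvy]; simp
    have := h4 _ hnv hperp
    rw [map_smul] at this
    have hne : (n : ℚ) ≠ 0 := by exact_mod_cast hn
    have := smul_right_injective V hne (by rw [this] : (n : ℚ) • ghat' (v : V) = (n : ℚ) • (v : V))
    exact this
  rw [map_add, map_add, hWagree _ w.2, hPagree c, hW_apply, hP_apply]
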